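/- Let 2 ≤ d < n, let 1 ≤ a ≤ n and 1 ≤ b ≤ C(n,d), and let M₁ ∈ ple(b,a) be a ple of P(1,d;n) that is not maximal-preserving. Then there exists M₂ ∈ ple(b,a) with q(M₂) = q(M₁) + 1. -/

import Mathlib

noncomputable section

/-- A partial linear extension (ple) of a poset, encoded as a list of distinct elements:
the list order is the linear order, and it must extend the poset order on its members. -/
def IsPLE (α : Type*) [PartialOrder α] [DecidableEq α] (l : List α) : Prop :=
  l.Nodup ∧ ∀ x ∈ l, ∀ y ∈ l, x < y → l.idxOf x < l.idxOf y

/-- `u ≤ v` in the ple `l`. -/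
def pleLE {α : Type*} [DecidableEq α] (l : List α) (u v : α) : Prop :=
  u ∈ l ∧ v ∈ l ∧ l.idxOf u ≤ l.idxOf v

/-- `u < v` in the ple `l`. -/
def pleLT {α : Type*} [DecidableEq α] (l : List α) (u v : α) : Prop :=
  u ∈ l ∧ v ∈ l ∧ l.idxOf u < l.idxOf v

/-- A local weight function: assigns to each ple of the poset a weight in [0,1]. -/
structure LocalWeight (α : Type*) [PartialOrder α] [DecidableEq α] where
  w : List α → ℝ
  nonneg : ∀ l, 0 ≤ w l
  le_one : ∀ l, w l ≤ 1
  supp : ∀ l, ¬ IsPLE α l → w l = 0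

/-- local measure μ(u,w): total weight of ple's containing `u`. -/
def localMeasure {α : Type*} [PartialOrder α] [DecidableEq α] (W : LocalWeight α) (u : α) : ℝ :=
  ∑ᶠ l ∈ {l : List α | IsPLE α l ∧ u ∈ l}, W.w l

/-- μ(P,w): the maximum local measure over elements of the poset. -/
def maxLocalMeasure {α : Type*} [PartialOrder α] [DecidableEq α] [Fintype α]
    (W : LocalWeight α) : ℝ :=
  ⨆ u : α, localMeasure W u

/-- A fractional local realizer. -/
def IsFLRealizer {α : Type*} [PartialOrder α] [DecidableEq α] (W : LocalWeight α) : Prop :=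
  (∀ u v : α, u ≤ v →
    1 ≤ ∑ᶠ l ∈ {l : List α | IsPLE α l ∧ pleLE l u v}, W.w l) ∧
  (∀ u v : α, ¬ u ≤ v → ¬ v ≤ u →
    1 ≤ ∑ᶠ l ∈ {l : List α | IsPLE α l ∧ pleLT l v u}, W.w l)

/-- The fractional local dimension of a finite poset. -/
def fldim (α : Type*) [PartialOrder α] [DecidableEq α] [Fintype α] : ℝ :=
  sInf {c : ℝ | ∃ W : LocalWeight α, IsFLRealizer W ∧ maxLocalMeasure W = c}

/-- The poset P(1,d;n): all 1-element and d-element subsets of {1,…,n}, ordered by inclusion. -/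
abbrev PosetOneDN (d n : ℕ) := {S : Finset (Fin n) // S.card = 1 ∨ S.card = d}

/-- fldim(1,d;n). -/
def fldim1dn (d n : ℕ) : ℝ := fldim (PosetOneDN d n)

end

open scoped Classical

/-- a(M): number of minimal elements (singletons) of P(1,d;n) occurring in the ple M. -/
noncomputable def aCount (d n : ℕ) (l : List (PosetOneDN d n)) : ℕ :=
  (l.filter (fun S => S.val.card = 1)).length

/-- b(M): number of maximal elements (d-element sets) of P(1,d;n) occurring in M. -/
noncomputable def bCount (d n : ℕ) (l : List (PosetOneDN d n)) : ℕ :=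
  (l.filter (fun S => S.val.card = d)).length

/-- r(M): number of pairs (u,S) with u a singleton, S a d-set, and u > S in M. -/
noncomputable def rCount (d n : ℕ) (l : List (PosetOneDN d n)) : ℕ :=
  ((Finset.univ ×ˢ Finset.univ).filter
    (fun p : PosetOneDN d n × PosetOneDN d n =>
      p.1.val.card = 1 ∧ p.2.val.card = d ∧ pleLT l p.2 p.1)).card

/-- q(M): number of pairs (u,S) with u a singleton, S a d-set, and u < S in M. -/
noncomputable def qCount (d n : ℕ) (l : List (PosetOneDN d n)) : ℕ :=
  ((Finset.univ ×ˢ Finset.univ).filter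
    (fun p : PosetOneDN d n × PosetOneDN d n =>
      p.1.val.card = 1 ∧ p.2.val.card = d ∧ pleLT l p.1 p.2)).card


open List in
/-- If a list has an element failing `Q` strictly before one satisfying `Q`,
it has an adjacent such pair. -/
theorem exists_adj_pair {α : Type*} (Q : α → Prop) :
    ∀ (l : List α) (i j : ℕ) (hij : i < j) (hj : j < l.length),
      ¬ Q (l[i]'(hij.trans hj)) → Q (l[j]'hj) →
      ∃ A x y B, l = A ++ x :: y :: B ∧ ¬ Q x ∧ Q y := by
  intro l
  induction l with
  | nil => intro i j hij hj; simp at hj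
  | cons z t ih =>
    intro i j hij hj hQi hQj
    match i, j with
    | 0, j' + 1 =>
      simp only [List.getElem_cons_zero] at hQi
      simp only [List.getElem_cons_succ] at hQj
      match t with
      | [] => simp at hj
      | y :: t' =>
        by_cases hy : Q y
        · exact ⟨[], z, y, t', rfl, hQi, hy⟩
        · have hj' : j' < (y :: t').length := by
            simpa using Nat.lt_of_succ_lt_succ hj
          have hj'pos : 0 < j' := by
            rcases Nat.eq_zero_or_pos j' with h0 | h
            · subst h0; simp only [List.getElem_cons_zero] at hQj; exact absurd hQj hy
            · exact h
          obtain ⟨A, x, y', B, hE, h1, h2⟩ :=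
            ih 0 j' hj'pos hj' (by simpa using hy) hQj
          exact ⟨z :: A, x, y', B, by rw [List.cons_append, hE], h1, h2⟩
    | i' + 1, j' + 1 =>
      simp only [List.getElem_cons_succ] at hQi hQj
      obtain ⟨A, x, y', B, hE, h1, h2⟩ :=
        ih i' j' (Nat.lt_of_succ_lt_succ hij) (Nat.lt_of_succ_lt_succ hj) hQi hQj
      exact ⟨z :: A, x, y', B, by rw [List.cons_append, hE], h1, h2⟩

section IdxLemmas
variable {α : Type*} [DecidableEq α]

theorem idx_mid_left (A B : List α) (S u : α) (h : S ∉ A) :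
    (A ++ S :: u :: B).idxOf S = A.length := by
  simp [List.idxOf_append_of_notMem h, List.idxOf_cons_self]

theorem idx_mid_right (A B : List α) (S u : α) (hA : u ∉ A) (hSu : S ≠ u) :
    (A ++ S :: u :: B).idxOf u = A.length + 1 := by
  simp [List.idxOf_append_of_notMem hA, List.idxOf_cons_ne _ hSu, List.idxOf_cons_self]

theorem idx_other (A B : List α) (S u x : α) (hx : x ≠ S) (hxu : x ≠ u) :
    (A ++ u :: S :: B).idxOf x = (A ++ S :: u :: B).idxOf x := by
  by_cases hA : x ∈ A
  · rw [List.idxOf_append_of_mem hA, List.idxOf_append_of_mem hA]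
  · rw [List.idxOf_append_of_notMem hA, List.idxOf_append_of_notMem hA,
      List.idxOf_cons_ne _ (Ne.symm hx), List.idxOf_cons_ne _ (Ne.symm hxu),
      List.idxOf_cons_ne _ (Ne.symm hxu), List.idxOf_cons_ne _ (Ne.symm hx)]

end IdxLemmas

/-- If M₁ ∈ ple(b,a) is not maximal-preserving, then there is
M₂ ∈ ple(b,a) with q(M₂) = q(M₁) + 1. -/
theorem exists_q_add_one (d n : ℕ) (hd : 2 ≤ d) (hn : d < n)
    (a b : ℕ) (ha1 : 1 ≤ a) (han : a ≤ n) (hb1 : 1 ≤ b) (hbn : b ≤ n.choose d)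
    (M₁ : List (PosetOneDN d n)) (hM₁ : IsPLE (PosetOneDN d n) M₁)
    (haM₁ : aCount d n M₁ = a) (hbM₁ : bCount d n M₁ = b)
    (hnotmp : ∃ M' : List (PosetOneDN d n), IsPLE (PosetOneDN d n) M' ∧
      aCount d n M' = a ∧ bCount d n M' = b ∧ qCount d n M₁ < qCount d n M') :
    ∃ M₂ : List (PosetOneDN d n), IsPLE (PosetOneDN d n) M₂ ∧
      aCount d n M₂ = a ∧ bCount d n M₂ = b ∧
      qCount d n M₂ = qCount d n M₁ + 1 := by
  letI : BEq (PosetOneDN d n) := instBEqOfDecidableEq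
  -- q is at most a*b
  have hq_le : ∀ l : List (PosetOneDN d n), l.Nodup →
      qCount d n l ≤ aCount d n l * bCount d n l := by
    intro l hl
    unfold qCount aCount bCount
    rw [← List.toFinset_card_of_nodup (hl.filter _), ← List.toFinset_card_of_nodup (hl.filter _),
      ← Finset.card_product]
    apply Finset.card_le_card
    rw [Finset.subset_iff]
    intro p hp
    simp only [Finset.mem_filter] at hp
    simp only [Finset.mem_filter, Finset.mem_product, Finset.mem_univ, true_and,
      List.mem_toFinset, List.mem_filter, decide_eq_true_eq, pleLT] at hp ⊢
    exact ⟨⟨hp.2.2.1, hp.1⟩, hp.2.2.2.1, hp.2.1⟩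
  obtain ⟨M', hM', haM', hbM', hqlt⟩ := hnotmp
  have hab : qCount d n M₁ < a * b := by
    calc qCount d n M₁ < qCount d n M' := hqlt
    _ ≤ a * b := by rw [← haM', ← hbM']; exact hq_le M' hM'.1
  -- find a pair (u₀, S₀) with S₀ before u₀ in M₁
  set T : Finset (PosetOneDN d n × PosetOneDN d n) :=
    (M₁.filter (fun S : PosetOneDN d n => S.val.card = 1)).toFinset ×ˢ
    (M₁.filter (fun S : PosetOneDN d n => S.val.card = d)).toFinset with hT
  have hTcard : T.card = a * b := by
    rw [hT, Finset.card_product,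
      List.toFinset_card_of_nodup (hM₁.1.filter (fun S : PosetOneDN d n => decide (S.val.card = 1))),
      List.toFinset_card_of_nodup (hM₁.1.filter (fun S : PosetOneDN d n => decide (S.val.card = d)))]
    show aCount d n M₁ * bCount d n M₁ = a * b
    rw [haM₁, hbM₁]
  have hnotsub : ¬ T ⊆ ((Finset.univ ×ˢ Finset.univ).filter
      (fun p : PosetOneDN d n × PosetOneDN d n =>
        p.1.val.card = 1 ∧ p.2.val.card = d ∧ pleLT M₁ p.1 p.2)) := by
    intro hsub
    have h2 := Finset.card_le_card hsub
    rw [hTcard] at h2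
    have h3 : qCount d n M₁ = ((Finset.univ ×ˢ Finset.univ).filter
      (fun p : PosetOneDN d n × PosetOneDN d n =>
        p.1.val.card = 1 ∧ p.2.val.card = d ∧ pleLT M₁ p.1 p.2)).card := rfl
    omega
  obtain ⟨p, hpT, hpq⟩ := Finset.not_subset.mp hnotsub
  rw [hT] at hpT
  simp only [Finset.mem_product, List.mem_toFinset, List.mem_filter, decide_eq_true_eq] at hpT
  obtain ⟨⟨hp1m, hp1c⟩, hp2m, hp2c⟩ := hpT
  have hplt : ¬ pleLT M₁ p.1 p.2 := by
    intro h
    apply hpq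
    simp only [Finset.mem_filter, Finset.mem_product, Finset.mem_univ, true_and]
    exact ⟨hp1c, hp2c, h⟩
  have hp12 : p.1 ≠ p.2 := by
    intro h; rw [h, hp2c] at hp1c; omega
  have hlt21 : M₁.idxOf p.2 < M₁.idxOf p.1 := by
    rcases lt_trichotomy (M₁.idxOf p.1) (M₁.idxOf p.2) with h | h | h
    · exact absurd ⟨hp1m, hp2m, h⟩ hplt
    · exact absurd ((List.idxOf_inj hp1m).mp h) hp12
    · exact h
  -- find an adjacent pair (S, u) with card S = d, card u = 1
  have hjlt : M₁.idxOf p.1 < M₁.length := List.idxOf_lt_length_iff.mpr hp1m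
  obtain ⟨A, S, u, B, hdec, hSQ, huQ⟩ :=
    exists_adj_pair (fun z : PosetOneDN d n => z.val.card = 1) M₁
      (M₁.idxOf p.2) (M₁.idxOf p.1) hlt21 hjlt
      (by rw [List.getElem_idxOf (List.idxOf_lt_length_iff.mpr hp2m)]
          simp only [hp2c]; omega)
      (by rw [List.getElem_idxOf hjlt]; exact hp1c)
  have hScard : S.val.card = d := by
    rcases S.prop with h | h
    · exact absurd h hSQ
    · exact h
  have hSu : S ≠ u := by
    intro h; rw [h, huQ] at hScard; omega
  -- nodup facts
  have hnd : (A ++ S :: u :: B).Nodup := hdec ▸ hM₁.1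
  rw [List.nodup_append] at hnd
  have hSA : S ∉ A := fun h => hnd.2.2 _ h _ (by simp) rfl
  have huA : u ∉ A := fun h => hnd.2.2 _ h _ (by simp) rfl
  -- the swapped list
  set M₂ : List (PosetOneDN d n) := A ++ u :: S :: B with hM₂def
  have hperm : M₂.Perm M₁ := by
    rw [hM₂def, hdec]
    exact List.Perm.append_left A (List.Perm.swap S u B)
  have hmem : ∀ x : PosetOneDN d n, x ∈ M₂ ↔ x ∈ M₁ := fun x => hperm.mem_iff
  -- index computations
  have hS1 : M₁.idxOf S = A.length := by rw [hdec]; exact idx_mid_left A B S u hSA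
  have hu1 : M₁.idxOf u = A.length + 1 := by rw [hdec]; exact idx_mid_right A B S u huA hSu
  have hu2 : M₂.idxOf u = A.length := idx_mid_left A B u S huA
  have hS2 : M₂.idxOf S = A.length + 1 := idx_mid_right A B u S hSA (Ne.symm hSu)
  have hoth : ∀ x : PosetOneDN d n, x ≠ S → x ≠ u → M₂.idxOf x = M₁.idxOf x := by
    intro x h1 h2
    rw [hdec]; exact idx_other A B S u x h1 h2
  have hSmem : S ∈ M₁ := hdec ▸ (by simp)
  have humem : u ∈ M₁ := hdec ▸ (by simp)
  have hidx : ∀ z : PosetOneDN d n, z ∈ M₁ →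
      (M₂.idxOf z = M₁.idxOf z ∧ M₁.idxOf z ≠ A.length ∧
        M₁.idxOf z ≠ A.length + 1) ∨ z = S ∨ z = u := by
    intro z hz
    by_cases h1 : z = S
    · exact Or.inr (Or.inl h1)
    by_cases h2 : z = u
    · exact Or.inr (Or.inr h2)
    refine Or.inl ⟨hoth z h1 h2, ?_, ?_⟩
    · rw [← hS1]
      intro h
      exact h1 ((List.idxOf_inj hz).mp h)
    · rw [← hu1]
      intro h
      exact h2 ((List.idxOf_inj hz).mp h)
  -- relative order is preserved except for the pair (u, S)
  have horder : ∀ x y : PosetOneDN d n, x ∈ M₁ → y ∈ M₁ →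
      ¬(x = u ∧ y = S) → ¬(x = S ∧ y = u) →
      (M₂.idxOf x < M₂.idxOf y ↔ M₁.idxOf x < M₁.idxOf y) := by
    intro x y hx hy hc1 hc2
    rcases hidx x hx with ⟨ex, exa, exb⟩ | rfl | rfl
    · rcases hidx y hy with ⟨ey, eya, eyb⟩ | rfl | rfl
      · rw [ex, ey]
      · rw [ex, hS2, hS1]; constructor <;> intro <;> omega
      · rw [ex, hu2, hu1]; constructor <;> intro <;> omega
    · rcases hidx y hy with ⟨ey, eya, eyb⟩ | rfl | rfl
      · rw [hS2, hS1, ey]; constructor <;> intro <;> omega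
      · simp
      · exact absurd ⟨rfl, rfl⟩ hc2
    · rcases hidx y hy with ⟨ey, eya, eyb⟩ | rfl | rfl
      · rw [hu2, hu1, ey]; constructor <;> intro <;> omega
      · exact absurd ⟨rfl, rfl⟩ hc1
      · simp
  refine ⟨M₂, ⟨hperm.nodup_iff.mpr hM₁.1, ?_⟩, ?_, ?_, ?_⟩
  · -- order condition
    intro x hx y hy hxy
    have hx1 : x ∈ M₁ := (hmem x).mp hx
    have hy1 : y ∈ M₁ := (hmem y).mp hy
    by_cases hc : x = u ∧ y = S
    · obtain ⟨rfl, rfl⟩ := hc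
      rw [hu2, hS2]; omega
    · have hns : ¬(x = S ∧ y = u) := by
        rintro ⟨h1, h2⟩
        rw [h1, h2] at hxy
        have hle : S.val ⊆ u.val := le_of_lt hxy
        have := Finset.card_le_card hle
        rw [hScard, huQ] at this; omega
      exact (horder x y hx1 hy1 hc hns).mpr (hM₁.2 x hx1 y hy1 hxy)
  · rw [← haM₁]
    unfold aCount
    exact (hperm.filter _).length_eq
  · rw [← hbM₁]
    unfold bCount
    exact (hperm.filter _).length_eq
  · -- q increases by exactly one
    have hnotin : (u, S) ∉ ((Finset.univ ×ˢ Finset.univ).filter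
        (fun p : PosetOneDN d n × PosetOneDN d n =>
          p.1.val.card = 1 ∧ p.2.val.card = d ∧ pleLT M₁ p.1 p.2)) := by
      simp only [Finset.mem_filter]
      simp only [Finset.mem_filter, Finset.mem_product, Finset.mem_univ, true_and, pleLT]
      rintro ⟨-, -, -, -, hlt⟩
      rw [hu1, hS1] at hlt; omega
    have hset : ((Finset.univ ×ˢ Finset.univ).filter
        (fun p : PosetOneDN d n × PosetOneDN d n =>
          p.1.val.card = 1 ∧ p.2.val.card = d ∧ pleLT M₂ p.1 p.2)) =
        insert (u, S) ((Finset.univ ×ˢ Finset.univ).filter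
        (fun p : PosetOneDN d n × PosetOneDN d n =>
          p.1.val.card = 1 ∧ p.2.val.card = d ∧ pleLT M₁ p.1 p.2)) := by
      ext q
      simp only [Finset.mem_insert, Finset.mem_filter]
      simp only [Finset.mem_filter, Finset.mem_product, Finset.mem_univ, true_and,
        Finset.mem_insert, pleLT]
      constructor
      · rintro ⟨hq1, hq2, hm1, hm2, hlt⟩
        by_cases hq : q = (u, S)
        · exact Or.inl hq
        · refine Or.inr ⟨hq1, hq2, (hmem _).mp hm1, (hmem _).mp hm2, ?_⟩
          have hcu : ¬(q.1 = u ∧ q.2 = S) := by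
            rintro ⟨h1, h2⟩
            apply hq
            cases q
            simp_all
          have hcs : ¬(q.1 = S ∧ q.2 = u) := by
            rintro ⟨h1, -⟩
            rw [h1, hScard] at hq1; omega
          exact (horder q.1 q.2 ((hmem _).mp hm1) ((hmem _).mp hm2) hcu hcs).mp hlt
      · rintro (rfl | ⟨hq1, hq2, hm1, hm2, hlt⟩)
        · refine ⟨huQ, hScard, (hmem u).mpr humem, (hmem S).mpr hSmem, ?_⟩
          rw [hu2, hS2]; omega
        · refine ⟨hq1, hq2, (hmem _).mpr hm1, (hmem _).mpr hm2, ?_⟩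
          have hcu : ¬(q.1 = u ∧ q.2 = S) := by
            rintro ⟨h1, h2⟩
            rw [h1, h2, hu1, hS1] at hlt; omega
          have hcs : ¬(q.1 = S ∧ q.2 = u) := by
            rintro ⟨h1, -⟩
            rw [h1, hScard] at hq1; omega
          exact (horder q.1 q.2 hm1 hm2 hcu hcs).mpr hlt
    unfold qCount
    rw [hset, Finset.card_insert_of_notMem hnotin]
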